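/- Let p be a prime. Every g ∈ GL₂(ℚ_p) can be written as g = b·k with b ∈ B(ℚ_p) an upper triangular matrix and k ∈ GL₂(ℤ_p); that is, the Iwasawa decomposition GL₂(ℚ_p) = B(ℚ_p)·GL₂(ℤ_p) holds. -/

import Mathlib

set_option synthInstance.maxHeartbeats 1000000
set_option maxHeartbeats 1000000

open Matrix

/-- The Borel subgroup of upper triangular matrices in `GL₂(R)`. -/
def BorelGL2 (R : Type*) [CommRing R] : Subgroup (GL (Fin 2) R) where
  carrier := {g | (g : Matrix (Fin 2) (Fin 2) R) 1 0 = 0}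
  one_mem' := by
    show ((1 : GL (Fin 2) R) : Matrix (Fin 2) (Fin 2) R) 1 0 = 0
    simp [Matrix.one_apply]
  mul_mem' := by
    intro a b ha hb
    show ((a * b : GL (Fin 2) R) : Matrix (Fin 2) (Fin 2) R) 1 0 = 0
    have ha' : (a : Matrix (Fin 2) (Fin 2) R) 1 0 = 0 := ha
    have hb' : (b : Matrix (Fin 2) (Fin 2) R) 1 0 = 0 := hb
    simp [Units.val_mul, Matrix.mul_apply, Fin.sum_univ_two, ha', hb']
  inv_mem' := by
    intro a ha
    have ha' : (a : Matrix (Fin 2) (Fin 2) R) 1 0 = 0 := ha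
    show ((a⁻¹ : GL (Fin 2) R) : Matrix (Fin 2) (Fin 2) R) 1 0 = 0
    rw [Matrix.coe_units_inv, Matrix.inv_def]
    simp [Matrix.adjugate_fin_two, ha']

/-- `GL₂(ℤ_p)` as a subgroup of `GL₂(ℚ_p)` (the range of `GL₂(ℤ_p) → GL₂(ℚ_p)`). -/
noncomputable def GLZp (p : ℕ) [Fact p.Prime] : Subgroup (GL (Fin 2) ℚ_[p]) :=
  (Units.map (RingHom.mapMatrix (PadicInt.Coe.ringHom (p := p))).toMonoidHom).range

lemma iwasawa_aux (p : ℕ) [Fact p.Prime] (g : GL (Fin 2) ℚ_[p]) (k' : GL (Fin 2) ℤ_[p])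
    (h : ((g * (Units.map (RingHom.mapMatrix
        (PadicInt.Coe.ringHom (p := p))).toMonoidHom k')⁻¹ :
        GL (Fin 2) ℚ_[p]) : Matrix (Fin 2) (Fin 2) ℚ_[p]) 1 0 = 0) :
    ∃ b ∈ BorelGL2 ℚ_[p], ∃ k ∈ GLZp p, g = b * k := by
  set kq : GL (Fin 2) ℚ_[p] :=
    Units.map (RingHom.mapMatrix (PadicInt.Coe.ringHom (p := p))).toMonoidHom k' with hkq
  refine ⟨g * kq⁻¹, h, kq, ⟨k', rfl⟩, by group⟩

/-- Iwasawa decomposition: `GL₂(ℚ_p) = B(ℚ_p)·GL₂(ℤ_p)`, i.e. every `g ∈ GL₂(ℚ_p)` can be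
written `g = b·k` with `b` upper triangular and `k ∈ GL₂(ℤ_p)`. -/
theorem iwasawa_decomposition (p : ℕ) [Fact p.Prime] (g : GL (Fin 2) ℚ_[p]) :
    ∃ b ∈ BorelGL2 ℚ_[p], ∃ k ∈ GLZp p, g = b * k := by
  set c : ℚ_[p] := (g : Matrix (Fin 2) (Fin 2) ℚ_[p]) 1 0 with hc
  set d : ℚ_[p] := (g : Matrix (Fin 2) (Fin 2) ℚ_[p]) 1 1 with hd
  by_cases hcd : ‖c‖ ≤ ‖d‖
  · -- d might be zero only if c is also zero; but then bottom row is zero, contradiction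
    by_cases hd0 : d = 0
    · exfalso
      have hc0 : c = 0 := by
        rw [hd0, norm_zero] at hcd
        exact norm_le_zero_iff.mp hcd
      have hdet : (g : Matrix (Fin 2) (Fin 2) ℚ_[p]).det ≠ 0 :=
        ((Matrix.isUnit_iff_isUnit_det _).mp g.isUnit).ne_zero
      apply hdet
      rw [Matrix.det_fin_two, ← hc, ← hd, hc0, hd0]
      ring
    · have ht : ‖c / d‖ ≤ 1 := by
        rw [norm_div, div_le_one (norm_pos_iff.mpr hd0)]
        exact hcd
      set t : ℤ_[p] := ⟨c / d, ht⟩ with htdef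
      set k' : GL (Fin 2) ℤ_[p] :=
        ⟨!![1, 0; t, 1], !![1, 0; -t, 1], by
          ext i j; fin_cases i <;> fin_cases j <;>
            simp [Matrix.mul_apply, Fin.sum_univ_two], by
          ext i j; fin_cases i <;> fin_cases j <;>
            simp [Matrix.mul_apply, Fin.sum_univ_two]⟩ with hk'
      apply iwasawa_aux p g k'
      have hinv : (((Units.map (RingHom.mapMatrix
          (PadicInt.Coe.ringHom (p := p))).toMonoidHom k')⁻¹ :
          GL (Fin 2) ℚ_[p]) : Matrix (Fin 2) (Fin 2) ℚ_[p]) =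
          (!![1, 0; -t, 1] : Matrix (Fin 2) (Fin 2) ℤ_[p]).map
            (PadicInt.Coe.ringHom (p := p)) := rfl
      rw [Units.val_mul, Matrix.mul_apply, Fin.sum_univ_two, hinv]
      simp only [Matrix.map_apply, Matrix.cons_val', Matrix.cons_val_zero, Matrix.cons_val_one,
        Matrix.head_cons, Matrix.empty_val', Matrix.cons_val_fin_one, Matrix.head_fin_const]
      show c * ((1 : ℤ_[p]) : ℚ_[p]) + d * ((-t : ℤ_[p]) : ℚ_[p]) = 0
      rw [PadicInt.coe_neg]
      push_cast [htdef]
      field_simp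
      ring
  · push_neg at hcd
    have hc0 : c ≠ 0 := by
      intro h0
      rw [h0, norm_zero] at hcd
      exact absurd hcd (norm_nonneg d).not_gt
    have hs : ‖d / c‖ ≤ 1 := by
      rw [norm_div, div_le_one (norm_pos_iff.mpr hc0)]
      exact hcd.le
    set s : ℤ_[p] := ⟨d / c, hs⟩ with hsdef
    set k' : GL (Fin 2) ℤ_[p] :=
      ⟨!![0, 1; 1, s], !![-s, 1; 1, 0], by
        ext i j; fin_cases i <;> fin_cases j <;>
          simp [Matrix.mul_apply, Fin.sum_univ_two], by
        ext i j; fin_cases i <;> fin_cases j <;>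
          simp [Matrix.mul_apply, Fin.sum_univ_two]⟩ with hk'
    apply iwasawa_aux p g k'
    have hinv : (((Units.map (RingHom.mapMatrix
        (PadicInt.Coe.ringHom (p := p))).toMonoidHom k')⁻¹ :
        GL (Fin 2) ℚ_[p]) : Matrix (Fin 2) (Fin 2) ℚ_[p]) =
        (!![-s, 1; 1, 0] : Matrix (Fin 2) (Fin 2) ℤ_[p]).map
          (PadicInt.Coe.ringHom (p := p)) := rfl
    rw [Units.val_mul, Matrix.mul_apply, Fin.sum_univ_two, hinv]
    simp only [Matrix.map_apply, Matrix.cons_val', Matrix.cons_val_zero, Matrix.cons_val_one,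
      Matrix.head_cons, Matrix.empty_val', Matrix.cons_val_fin_one, Matrix.head_fin_const]
    show c * ((-s : ℤ_[p]) : ℚ_[p]) + d * ((1 : ℤ_[p]) : ℚ_[p]) = 0
    rw [PadicInt.coe_neg]
    push_cast [hsdef]
    field_simp
    ring
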